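/- arXiv:2110.02188 — 5 statements merged into one kernel-verified Lean document; each statement's English description precedes it below -/
import Mathlib

section
/- For any integers α, β, γ with β > 0 and γ ∉ {-1, 0}, the continued fraction [α, β, γ] equals [α+1, -2, 2, -2, ..., ±2, (-1)^β(γ+1)], where the alternating-sign ±2 block has β−1 terms; that is, α + 1/(β + 1/γ) = (α+1) + 1/(-2 + 1/(2 + 1/(-2 + ... + 1/((-1)^β(γ+1))))). -/
/-- Evaluation of a finite continued fraction `[q₀, q₁, …, q_r]`. -/
def E : List ℤ → ℚ
  | [] => 0
  | [q] => (q : ℚ)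
  | q :: l => (q : ℚ) + 1 / E l

lemma E_single (q : ℤ) : E [q] = (q : ℚ) := rfl

lemma E_cons (q a : ℤ) (l : List ℤ) : E (q :: a :: l) = (q : ℚ) + 1 / E (a :: l) := rfl

lemma E_cons' (q : ℤ) (l : List ℤ) (h : l ≠ []) : E (q :: l) = (q : ℚ) + 1 / E l := by
  cases l with
  | nil => exact absurd rfl h
  | cons a t => exact E_cons q a t

lemma E_neg : ∀ l : List ℤ, E (l.map (fun q => -q)) = - E l
  | [] => by simp [E]
  | [q] => by simp [E]
  | q :: a :: l => by
    have ih := E_neg (a :: l)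
    simp only [List.map_cons] at ih ⊢
    rw [E_cons, E_cons, ih]
    push_cast
    ring

lemma int_aux (a γ : ℤ) (ha : 0 ≤ a) (hγ1 : γ ≠ -1) : a * γ + 1 ≠ 0 := by
  intro h
  have h1 : a * (-γ) = 1 := by linarith
  rcases Int.isUnit_iff.mp (IsUnit.of_mul_eq_one _ h1) with h2 | h2
  · subst h2; simp at h1; omega
  · omega

lemma rat_aux (a : ℕ) (γ : ℤ) (hγ1 : γ ≠ -1) : ((a : ℚ) * (γ : ℚ) + 1) ≠ 0 := by
  have h := int_aux a γ (Int.natCast_nonneg a) hγ1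
  intro hc
  apply h
  have : (((a : ℤ) * γ + 1 : ℤ) : ℚ) = 0 := by push_cast; linarith
  exact_mod_cast this

lemma key (γ : ℤ) (hγ1 : γ ≠ -1) : ∀ n : ℕ,
    E (List.ofFn (fun i : Fin n => if (i : ℕ) % 2 = 0 then (-2 : ℤ) else 2) ++
        [(-1) ^ (n + 1) * (γ + 1)]) =
      (((n : ℚ) + 1) * (γ : ℚ) + 1) / (-(n : ℚ) * (γ : ℚ) - 1)
  | 0 => by
    simp only [List.ofFn_zero, List.nil_append, E_single]
    push_cast
    rw [eq_div_iff (by norm_num : (-(0:ℚ))*(γ:ℚ)-1 ≠ 0)]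
    ring
  | n + 1 => by
    have hnum : (((n : ℚ) + 1) * (γ : ℚ) + 1) ≠ 0 := by
      have := rat_aux (n + 1) γ hγ1
      push_cast at this
      intro h; apply this; linarith
    have hden : (-(n : ℚ) * (γ : ℚ) - 1) ≠ 0 := by
      have := rat_aux n γ hγ1
      intro h; apply this; linarith
    have ih := key γ hγ1 n
    have hflip : (List.ofFn (fun i : Fin (n + 1) => if (i : ℕ) % 2 = 0 then (-2 : ℤ) else 2)) =
        (-2) :: (List.ofFn (fun i : Fin n => if (i : ℕ) % 2 = 0 then (-2 : ℤ) else 2)).map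
          (fun q => -q) := by
      rw [List.ofFn_succ, List.map_ofFn]
      refine congrArg (List.cons _) (congrArg List.ofFn (funext fun i => ?_))
      simp only [Function.comp, Fin.val_succ]
      rcases Nat.even_or_odd (i : ℕ) with h | h
      · simp [Nat.even_iff.mp h, Nat.succ_mod_two_eq_one_iff.mpr (Nat.even_iff.mp h)]
      · simp [Nat.odd_iff.mp h, Nat.succ_mod_two_eq_zero_iff.mpr (Nat.odd_iff.mp h)]
    have hsign : ((-1 : ℤ) ^ (n + 1 + 1) * (γ + 1)) = -((-1) ^ (n + 1) * (γ + 1)) := by ring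
    rw [hflip, hsign]
    have hmap : ((List.ofFn (fun i : Fin n => if (i : ℕ) % 2 = 0 then (-2 : ℤ) else 2)).map
          (fun q => -q)) ++ [-((-1) ^ (n + 1) * (γ + 1))] =
        ((List.ofFn (fun i : Fin n => if (i : ℕ) % 2 = 0 then (-2 : ℤ) else 2)) ++
          [(-1) ^ (n + 1) * (γ + 1)]).map (fun q => -q) := by
      simp
    rw [List.cons_append, hmap, E_cons' _ _ (by simp), E_neg, ih]
    push_cast
    rw [one_div, inv_neg, inv_div]
    have hnum2 : (-((n:ℚ)+1) * (γ:ℚ) - 1) ≠ 0 := by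
      intro h; apply hnum; linarith
    have hL : (-2:ℚ) + -((-(n:ℚ)*(γ:ℚ)-1)/(((n:ℚ)+1)*(γ:ℚ)+1)) =
        (-(((n:ℚ)+2)*(γ:ℚ)+1))/(((n:ℚ)+1)*(γ:ℚ)+1) := by
      rw [eq_div_iff hnum, ← neg_div, add_mul, div_mul_cancel₀ _ hnum]
      ring
    rw [hL, div_eq_div_iff hnum hnum2]
    ring

/-- For integers `α, β, γ` with `β > 0` and `γ ∉ {-1, 0}`,
`[α, β, γ] = [α+1, -2, 2, -2, …, ±2, (-1)^β (γ+1)]`, where the alternating block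
`-2, 2, -2, …` has `β - 1` terms. -/
theorem cf_block_identity (α β γ : ℤ) (hβ : 0 < β) (hγ1 : γ ≠ -1) (hγ0 : γ ≠ 0) :
    E [α, β, γ] =
      E ((α + 1) ::
        (List.ofFn (fun i : Fin (β - 1).toNat => if (i : ℕ) % 2 = 0 then (-2 : ℤ) else 2) ++
          [(-1) ^ β.toNat * (γ + 1)])) := by
  set n := (β - 1).toNat with hn
  have hn' : ((n : ℤ)) = β - 1 := Int.toNat_of_nonneg (by omega)
  have hβn : β.toNat = n + 1 := by omega
  have hγ : (γ : ℚ) ≠ 0 := Int.cast_ne_zero.mpr hγ0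
  have hnum : (((n : ℚ) + 1) * (γ : ℚ) + 1) ≠ 0 := by
    have := rat_aux (n + 1) γ hγ1
    push_cast at this
    intro h; apply this; linarith
  have hcast : (β : ℚ) = (n : ℚ) + 1 := by
    have : (β : ℤ) = (n : ℤ) + 1 := by omega
    exact_mod_cast this
  rw [hβn, E_cons' (α + 1) _ (by simp), key γ hγ1 n, E_cons, E_cons, E_single, hcast]
  have hden : (-(n : ℚ) * (γ : ℚ) - 1) ≠ 0 := by
    have := rat_aux n γ hγ1
    intro h; apply this; linarith
  have e1 : ((n : ℚ) + 1) + 1 / (γ : ℚ) = (((n : ℚ) + 1) * (γ : ℚ) + 1) / (γ : ℚ) := by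
    rw [eq_div_iff hγ, add_mul, one_div, inv_mul_cancel₀ hγ]
  rw [e1, one_div (_ / (γ:ℚ)), inv_div, one_div (_ / (-(n:ℚ)*(γ:ℚ)-1)), inv_div]
  have e2 : (γ : ℚ) / (((n : ℚ) + 1) * (γ : ℚ) + 1) -
      (-(n : ℚ) * (γ : ℚ) - 1) / (((n : ℚ) + 1) * (γ : ℚ) + 1) = 1 := by
    rw [div_sub_div_same, div_eq_one_iff_eq hnum]
    ring
  push_cast
  linarith
end

section
/- If M = [[a,b],[c,d]] lies in the group generated by L_u = [[1,0],[u,1]] and R_v = [[1,v],[0,1]] for integers u, v ≥ 2, then v divides b, u divides c, and a ≡ d ≡ 1 (mod uv). -/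
abbrev SL2 := Matrix.SpecialLinearGroup (Fin 2) ℤ

/-- `L_u = [[1,0],[u,1]]`. -/
def Lmat (u : ℤ) : SL2 :=
  ⟨!![1, 0; u, 1], by simp [Matrix.det_fin_two_of]⟩

/-- `R_v = [[1,v],[0,1]]`. -/
def Rmat (v : ℤ) : SL2 :=
  ⟨!![1, v; 0, 1], by simp [Matrix.det_fin_two_of]⟩

/-- The set `𝒢_{u,v}`. -/
def Gscr (u v : ℤ) : Set SL2 :=
  {M | ∃ n1 n2 n3 n4 : ℤ,
    (M : Matrix (Fin 2) (Fin 2) ℤ) = !![1 + u*v*n1, v*n2; u*n3, 1 + u*v*n4]}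

/-- The group `G_{u,v}` generated by `L_u` and `R_v`. -/
def Guv (u v : ℤ) : Subgroup SL2 := Subgroup.closure {Lmat u, Rmat v}

/-- Alternating product `R^{a₀} L^{a₁} R^{a₂} ⋯` from a list of exponents
(the boolean records whether the next factor is a power of `R`). -/
def altProd (u v : ℤ) : Bool → List ℤ → SL2
  | _, [] => 1
  | true, a :: l => (Rmat v) ^ a * altProd u v false l
  | false, a :: l => (Lmat u) ^ a * altProd u v true l

section
variable (u v : ℤ)

private def Pent (u v : ℤ) (N : SL2) : Prop :=
  v ∣ (N : Matrix (Fin 2) (Fin 2) ℤ) 0 1 ∧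
  u ∣ (N : Matrix (Fin 2) (Fin 2) ℤ) 1 0 ∧
  u * v ∣ ((N : Matrix (Fin 2) (Fin 2) ℤ) 0 0 - 1) ∧
  u * v ∣ ((N : Matrix (Fin 2) (Fin 2) ℤ) 1 1 - 1)

private lemma Pent_one : Pent u v 1 := by
  simp [Pent]

private lemma Pent_mul (A B : SL2) (hA : Pent u v A) (hB : Pent u v B) :
    Pent u v (A * B) := by
  obtain ⟨hb1, hc1, ha1, hd1⟩ := hA
  obtain ⟨hb2, hc2, ha2, hd2⟩ := hB
  have hmul : ((A * B : SL2) : Matrix (Fin 2) (Fin 2) ℤ) =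
      (A : Matrix (Fin 2) (Fin 2) ℤ) * (B : Matrix (Fin 2) (Fin 2) ℤ) := rfl
  refine ⟨?_, ?_, ?_, ?_⟩ <;>
    simp only [hmul, Matrix.mul_apply, Fin.sum_univ_two]
  · exact dvd_add (hb2.mul_left _) (hb1.mul_right _)
  · exact dvd_add (hc1.mul_right _) (hc2.mul_left _)
  · have h1 : u * v ∣ (A : Matrix (Fin 2) (Fin 2) ℤ) 0 0 *
        (B : Matrix (Fin 2) (Fin 2) ℤ) 0 0 - 1 := by
      have := Int.ModEq.mul (Int.modEq_iff_dvd.2 (by simpa using ha1)).symm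
        (Int.modEq_iff_dvd.2 (by simpa using ha2)).symm
      simpa using (Int.modEq_iff_dvd.1 this.symm)
    have h2 : u * v ∣ (A : Matrix (Fin 2) (Fin 2) ℤ) 0 1 *
        (B : Matrix (Fin 2) (Fin 2) ℤ) 1 0 := by
      obtain ⟨x, hx⟩ := hb1; obtain ⟨y, hy⟩ := hc2
      exact ⟨y * x, by rw [hx, hy]; ring⟩
    have := dvd_add h1 h2
    convert this using 1; rfl; ring
  · have h1 : u * v ∣ (A : Matrix (Fin 2) (Fin 2) ℤ) 1 1 *
        (B : Matrix (Fin 2) (Fin 2) ℤ) 1 1 - 1 := by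
      have := Int.ModEq.mul (Int.modEq_iff_dvd.2 (by simpa using hd1)).symm
        (Int.modEq_iff_dvd.2 (by simpa using hd2)).symm
      simpa using (Int.modEq_iff_dvd.1 this.symm)
    have h2 : u * v ∣ (A : Matrix (Fin 2) (Fin 2) ℤ) 1 0 *
        (B : Matrix (Fin 2) (Fin 2) ℤ) 0 1 := by
      obtain ⟨x, hx⟩ := hc1; obtain ⟨y, hy⟩ := hb2
      exact ⟨x * y, by rw [hx, hy]; ring⟩
    have := dvd_add h1 h2
    convert this using 1; rfl; ring

private lemma Pent_inv (A : SL2) (hA : Pent u v A) : Pent u v A⁻¹ := by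
  obtain ⟨hb, hc, ha, hd⟩ := hA
  have hinv : ((A⁻¹ : SL2) : Matrix (Fin 2) (Fin 2) ℤ) =
      Matrix.adjugate (A : Matrix (Fin 2) (Fin 2) ℤ) :=
    Matrix.SpecialLinearGroup.coe_inv A
  refine ⟨?_, ?_, ?_, ?_⟩ <;>
    simp only [hinv, Matrix.adjugate_fin_two,
      Matrix.cons_val', Matrix.cons_val_zero, Matrix.cons_val_one, Matrix.head_cons,
      Matrix.empty_val', Matrix.cons_val_fin_one, Matrix.head_fin_const, Matrix.of_apply]
  · exact hb.neg_right
  · exact hc.neg_right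
  · exact hd
  · exact ha

end

/-- If `M = [[a,b],[c,d]]` lies in the group generated by `L_u` and `R_v` (`u, v ≥ 2`),
then `v ∣ b`, `u ∣ c`, and `a ≡ d ≡ 1 (mod uv)`. -/
theorem mem_Guv_entries (u v : ℤ) (hu : 2 ≤ u) (hv : 2 ≤ v) (M : SL2) (hM : M ∈ Guv u v) :
    v ∣ (M : Matrix (Fin 2) (Fin 2) ℤ) 0 1 ∧
    u ∣ (M : Matrix (Fin 2) (Fin 2) ℤ) 1 0 ∧
    (M : Matrix (Fin 2) (Fin 2) ℤ) 0 0 ≡ 1 [ZMOD u * v] ∧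
    (M : Matrix (Fin 2) (Fin 2) ℤ) 1 1 ≡ 1 [ZMOD u * v] := by
  have hP : Pent u v M := by
    refine Subgroup.closure_induction (p := fun N _ => Pent u v N) ?_ (Pent_one u v)
      (fun x y _ _ hx hy => Pent_mul u v x y hx hy)
      (fun x _ hx => Pent_inv u v x hx) hM
    rintro x (rfl | rfl)
    · refine ⟨?_, ?_, ?_, ?_⟩ <;> simp [Lmat]
    · refine ⟨?_, ?_, ?_, ?_⟩ <;> simp [Rmat]
  obtain ⟨hb, hc, ha, hd⟩ := hP
  exact ⟨hb, hc, Int.modEq_iff_dvd.2 (by simpa using (dvd_neg.2 ha)),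
    Int.modEq_iff_dvd.2 (by simpa using (dvd_neg.2 hd))⟩
end

section
/- Let u, v be integers and r an odd positive integer, and let α₀, α₁, ..., α_r be integers with α_i ≠ 0 for 0 < i < r. If M = R_v^{α₀} L_u^{α₁} R_v^{α₂} ⋯ R_v^{α_{r-1}} L_u^{α_r} = [[a,b],[c,d]], then b/d = [vα₀, uα₁, vα₂, ..., vα_{r-1}], i.e., b/d equals the continued fraction with partial quotients vα₀, uα₁, ..., vα_{r-1}, provided u, v ≥ 2 so that all intermediate denominators are nonzero. -/
/-! ### Auxiliary machinery -/

/-- The list of partial quotients: entries scaled alternately by `v` and `u`. -/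
def scale (u v : ℤ) : Bool → List ℤ → List ℤ
  | _, [] => []
  | true, a :: l => (v * a) :: scale u v false l
  | false, a :: l => (u * a) :: scale u v true l

lemma Rmat_mul (x y : ℤ) : Rmat x * Rmat y = Rmat (x + y) := by
  ext i j
  rw [Matrix.SpecialLinearGroup.coe_mul]
  fin_cases i <;> fin_cases j <;>
    simp [Rmat, Matrix.mul_apply, Fin.sum_univ_two] <;> ring

lemma Rmat_zero : Rmat 0 = 1 := by
  ext i j; fin_cases i <;> fin_cases j <;> simp [Rmat]

lemma Rmat_inv (x : ℤ) : (Rmat x)⁻¹ = Rmat (-x) := by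
  rw [inv_eq_iff_mul_eq_one, Rmat_mul]; simp [Rmat_zero]

lemma Lmat_mul (x y : ℤ) : Lmat x * Lmat y = Lmat (x + y) := by
  ext i j
  rw [Matrix.SpecialLinearGroup.coe_mul]
  fin_cases i <;> fin_cases j <;>
    simp [Lmat, Matrix.mul_apply, Fin.sum_univ_two] <;> ring

lemma Lmat_zero : Lmat 0 = 1 := by
  ext i j; fin_cases i <;> fin_cases j <;> simp [Lmat]

lemma Lmat_inv (x : ℤ) : (Lmat x)⁻¹ = Lmat (-x) := by
  rw [inv_eq_iff_mul_eq_one, Lmat_mul]; simp [Lmat_zero]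

lemma Rmat_zpow (v : ℤ) (a : ℤ) : Rmat v ^ a = Rmat (v * a) := by
  induction a using Int.induction_on with
  | zero => simpa using Rmat_zero.symm
  | succ n ih => rw [zpow_add_one, ih, Rmat_mul]; ring_nf
  | pred n ih => rw [zpow_sub_one, ih, Rmat_inv, Rmat_mul]; ring_nf

lemma Lmat_zpow (u : ℤ) (a : ℤ) : Lmat u ^ a = Lmat (u * a) := by
  induction a using Int.induction_on with
  | zero => simpa using Lmat_zero.symm
  | succ n ih => rw [zpow_add_one, ih, Lmat_mul]; ring_nf
  | pred n ih => rw [zpow_sub_one, ih, Lmat_inv, Lmat_mul]; ring_nf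

lemma R_mul_apply_01 (w : ℤ) (N : SL2) :
    ((Rmat w * N : SL2) : Matrix (Fin 2) (Fin 2) ℤ) 0 1
      = (N : Matrix (Fin 2) (Fin 2) ℤ) 0 1 + w * (N : Matrix (Fin 2) (Fin 2) ℤ) 1 1 := by
  rw [Matrix.SpecialLinearGroup.coe_mul]
  simp [Rmat, Matrix.SpecialLinearGroup.coe_mul, Matrix.mul_apply, Fin.sum_univ_two]

lemma R_mul_apply_11 (w : ℤ) (N : SL2) :
    ((Rmat w * N : SL2) : Matrix (Fin 2) (Fin 2) ℤ) 1 1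
      = (N : Matrix (Fin 2) (Fin 2) ℤ) 1 1 := by
  rw [Matrix.SpecialLinearGroup.coe_mul]
  simp [Rmat, Matrix.SpecialLinearGroup.coe_mul, Matrix.mul_apply, Fin.sum_univ_two]

lemma L_mul_apply_01 (w : ℤ) (N : SL2) :
    ((Lmat w * N : SL2) : Matrix (Fin 2) (Fin 2) ℤ) 0 1
      = (N : Matrix (Fin 2) (Fin 2) ℤ) 0 1 := by
  rw [Matrix.SpecialLinearGroup.coe_mul]
  simp [Lmat, Matrix.SpecialLinearGroup.coe_mul, Matrix.mul_apply, Fin.sum_univ_two]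

lemma L_mul_apply_11 (w : ℤ) (N : SL2) :
    ((Lmat w * N : SL2) : Matrix (Fin 2) (Fin 2) ℤ) 1 1
      = (N : Matrix (Fin 2) (Fin 2) ℤ) 1 1 + w * (N : Matrix (Fin 2) (Fin 2) ℤ) 0 1 := by
  rw [Matrix.SpecialLinearGroup.coe_mul]
  simp [Lmat, Matrix.SpecialLinearGroup.coe_mul, Matrix.mul_apply, Fin.sum_univ_two]
  ring

lemma mul_L_apply_01 (w : ℤ) (N : SL2) :
    ((N * Lmat w : SL2) : Matrix (Fin 2) (Fin 2) ℤ) 0 1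
      = (N : Matrix (Fin 2) (Fin 2) ℤ) 0 1 := by
  rw [Matrix.SpecialLinearGroup.coe_mul]
  simp [Lmat, Matrix.SpecialLinearGroup.coe_mul, Matrix.mul_apply, Fin.sum_univ_two]

lemma mul_L_apply_11 (w : ℤ) (N : SL2) :
    ((N * Lmat w : SL2) : Matrix (Fin 2) (Fin 2) ℤ) 1 1
      = (N : Matrix (Fin 2) (Fin 2) ℤ) 1 1 := by
  rw [Matrix.SpecialLinearGroup.coe_mul]
  simp [Lmat, Matrix.SpecialLinearGroup.coe_mul, Matrix.mul_apply, Fin.sum_univ_two]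

lemma abs_step (w s t : ℤ) (hw : 2 ≤ |w|) (h2 : |s| ≤ |t|) :
    |t| ≤ |s + w * t| := by
  have h4 : |w * t| ≤ |s + w * t| + |s| := by
    have h := abs_add_le (s + w * t) (-s)
    simpa using h
  rw [abs_mul] at h4
  have h5 : 0 ≤ (|w| - 2) * |t| := mul_nonneg (by linarith) (abs_nonneg t)
  nlinarith [abs_nonneg t, abs_nonneg s]

lemma two_le_abs_mul (v a : ℤ) (hv : 2 ≤ v) (ha : a ≠ 0) : 2 ≤ |v * a| := by
  rw [abs_mul, abs_of_nonneg (by linarith : (0:ℤ) ≤ v)]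
  nlinarith [Int.one_le_abs ha, abs_nonneg a]

lemma altProd_append (u v : ℤ) (m : List ℤ) :
    ∀ (l : List ℤ) (b : Bool), altProd u v b (l ++ m)
      = altProd u v b l * altProd u v (if Even l.length then b else !b) m := by
  intro l
  induction l with
  | nil => intro b; simp [altProd]
  | cons a l ih =>
    intro b
    cases b <;>
      simp only [List.cons_append, altProd, mul_assoc, List.length_cons,
        Nat.even_add_one, Bool.not_true, Bool.not_false] <;>
      by_cases h : Even l.length <;> simp [ih, h]

lemma scale_ofFn (u v : ℤ) :
    ∀ (n : ℕ) (b : Bool) (f : Fin n → ℤ),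
      scale u v b (List.ofFn f)
        = List.ofFn (fun i => (if (i : ℕ) % 2 = 0 then (bif b then v else u)
            else (bif b then u else v)) * f i) := by
  intro n
  induction n with
  | zero => intro b f; simp [scale]
  | succ n ih =>
    intro b f
    rw [List.ofFn_succ, List.ofFn_succ]
    have hb : ∀ b' : Bool, scale u v b' (f 0 :: List.ofFn fun i : Fin n => f i.succ)
        = (bif b' then v else u) * f 0 :: scale u v (!b') (List.ofFn fun i : Fin n => f i.succ) := by
      intro b'; cases b' <;> rfl
    rw [hb, ih]
    congr 1
    refine congrArg List.ofFn (funext fun i => ?_)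
    by_cases h : (i : ℕ) % 2 = 0
    · have h1 : ¬ ((i : ℕ) + 1) % 2 = 0 := by omega
      cases b <;> simp [h, h1]
    · have h1 : ((i : ℕ) + 1) % 2 = 0 := by omega
      cases b <;> simp [h, h1]

lemma key_s6 (u v : ℤ) (hu : 2 ≤ u) (hv : 2 ≤ v) :
    ∀ l : List ℤ,
      (Odd l.length → (∀ a ∈ l.tail, a ≠ 0) →
        1 ≤ |((altProd u v true l : SL2) : Matrix (Fin 2) (Fin 2) ℤ) 1 1| ∧
        ((((altProd u v true l : SL2) : Matrix (Fin 2) (Fin 2) ℤ) 0 1 : ℚ) /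
          (((altProd u v true l : SL2) : Matrix (Fin 2) (Fin 2) ℤ) 1 1 : ℚ)
            = E (scale u v true l)) ∧
        ((∀ a ∈ l, a ≠ 0) →
          |((altProd u v true l : SL2) : Matrix (Fin 2) (Fin 2) ℤ) 1 1| ≤
          |((altProd u v true l : SL2) : Matrix (Fin 2) (Fin 2) ℤ) 0 1|)) ∧
      (Even l.length → l ≠ [] → (∀ a ∈ l, a ≠ 0) →
        1 ≤ |((altProd u v false l : SL2) : Matrix (Fin 2) (Fin 2) ℤ) 0 1| ∧
        |((altProd u v false l : SL2) : Matrix (Fin 2) (Fin 2) ℤ) 0 1| ≤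
          |((altProd u v false l : SL2) : Matrix (Fin 2) (Fin 2) ℤ) 1 1| ∧
        ((((altProd u v false l : SL2) : Matrix (Fin 2) (Fin 2) ℤ) 1 1 : ℚ) /
          (((altProd u v false l : SL2) : Matrix (Fin 2) (Fin 2) ℤ) 0 1 : ℚ)
            = E (scale u v false l))) := by
  intro l
  induction l with
  | nil =>
    constructor
    · intro h; exact absurd h (by simp)
    · intro _ h; exact absurd rfl h
  | cons a l ih =>
    have hRa : altProd u v true (a :: l) = Rmat (v * a) * altProd u v false l := by
      rw [altProd, Rmat_zpow]
    have hLa : altProd u v false (a :: l) = Lmat (u * a) * altProd u v true l := by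
      rw [altProd, Lmat_zpow]
    constructor
    · -- T part
      intro hodd htail
      rcases l with _ | ⟨c, l'⟩
      · -- base case [a]
        have e01 : ((altProd u v true [a] : SL2) : Matrix (Fin 2) (Fin 2) ℤ) 0 1 = v * a := by
          rw [hRa]; rw [R_mul_apply_01]; simp [altProd]
        have e11 : ((altProd u v true [a] : SL2) : Matrix (Fin 2) (Fin 2) ℤ) 1 1 = 1 := by
          rw [hRa]; rw [R_mul_apply_11]; simp [altProd]
        refine ⟨by rw [e11]; simp, ?_, ?_⟩
        · rw [e01, e11]
          show ((v * a : ℤ) : ℚ) / ((1 : ℤ) : ℚ) = E [v * a]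
          simp [E]
        · intro hall
          have ha : a ≠ 0 := hall a (by simp)
          rw [e01, e11]
          have := two_le_abs_mul v a hv ha
          simp only [abs_one]
          linarith
      · -- step case
        have hlen : Even (c :: l').length := by
          rcases hodd with ⟨k, hk⟩
          simp only [List.length_cons] at hk ⊢
          exact ⟨k, by omega⟩
        have hall' : ∀ b ∈ (c :: l'), b ≠ 0 := by
          intro b hb; exact htail b (by simpa using hb)
        obtain ⟨h1, h2, h3⟩ := ih.2 hlen (by simp) hall'
        set N := altProd u v false (c :: l') with hN
        set x' := ((N : SL2) : Matrix (Fin 2) (Fin 2) ℤ) 0 1 with hx'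
        set y' := ((N : SL2) : Matrix (Fin 2) (Fin 2) ℤ) 1 1 with hy'
        have e01 : ((altProd u v true (a :: c :: l') : SL2) : Matrix (Fin 2) (Fin 2) ℤ) 0 1
            = x' + (v * a) * y' := by rw [hRa, R_mul_apply_01]
        have e11 : ((altProd u v true (a :: c :: l') : SL2) : Matrix (Fin 2) (Fin 2) ℤ) 1 1
            = y' := by rw [hRa, R_mul_apply_11]
        have hy0 : y' ≠ 0 := by
          intro h; rw [h, abs_zero] at h2; linarith
        refine ⟨by rw [e11]; linarith, ?_, ?_⟩
        · rw [e01, e11]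
          have hsc : scale u v true (a :: c :: l') = (v * a) :: (u * c) :: scale u v true l' := rfl
          have hsc2 : scale u v false (c :: l') = (u * c) :: scale u v true l' := rfl
          rw [hsc, show E ((v * a) :: (u * c) :: scale u v true l')
              = ((v * a : ℤ) : ℚ) + 1 / E ((u * c) :: scale u v true l') from by simp [E]]
          rw [← hsc2, ← h3, one_div_div]
          have hyQ : (y' : ℚ) ≠ 0 := Int.cast_ne_zero.mpr hy0
          push_cast
          field_simp
          ring
        · intro hall
          have ha : a ≠ 0 := hall a (by simp)
          rw [e01, e11]
          exact abs_step (v * a) x' y' (two_le_abs_mul v a hv ha) h2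
    · -- F part
      intro heven hne hall
      rcases l with _ | ⟨c, l'⟩
      · rcases heven with ⟨k, hk⟩
        simp only [List.length_cons, List.length_nil] at hk
        omega
      · have hlen : Odd (c :: l').length := by
          rcases heven with ⟨k, hk⟩
          simp only [List.length_cons] at hk ⊢
          exact ⟨k - 1, by omega⟩
        have hall' : ∀ b ∈ (c :: l'), b ≠ 0 := by
          intro b hb; exact hall b (List.mem_cons_of_mem _ hb)
        have htail' : ∀ b ∈ (c :: l').tail, b ≠ 0 := by
          intro b hb; exact hall' b (List.mem_of_mem_tail hb)
        obtain ⟨h1, h2, h3⟩ := ih.1 hlen htail'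
        have h3' := h3 hall'
        set N := altProd u v true (c :: l') with hN
        set x' := ((N : SL2) : Matrix (Fin 2) (Fin 2) ℤ) 0 1 with hx'
        set y' := ((N : SL2) : Matrix (Fin 2) (Fin 2) ℤ) 1 1 with hy'
        have e01 : ((altProd u v false (a :: c :: l') : SL2) : Matrix (Fin 2) (Fin 2) ℤ) 0 1
            = x' := by rw [hLa, L_mul_apply_01]
        have e11 : ((altProd u v false (a :: c :: l') : SL2) : Matrix (Fin 2) (Fin 2) ℤ) 1 1
            = y' + (u * a) * x' := by rw [hLa, L_mul_apply_11]
        have ha : a ≠ 0 := hall a (by simp)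
        have hx0 : x' ≠ 0 := by
          intro h; rw [h, abs_zero] at h3'; linarith
        refine ⟨by rw [e01]; linarith, ?_, ?_⟩
        · rw [e01, e11]
          exact abs_step (u * a) y' x' (two_le_abs_mul u a hu ha) h3'
        · rw [e01, e11]
          have hsc : scale u v false (a :: c :: l') = (u * a) :: (v * c) :: scale u v false l' := rfl
          have hsc2 : scale u v true (c :: l') = (v * c) :: scale u v false l' := rfl
          rw [hsc, show E ((u * a) :: (v * c) :: scale u v false l')
              = ((u * a : ℤ) : ℚ) + 1 / E ((v * c) :: scale u v false l') from by simp [E]]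
          rw [← hsc2, ← h2, one_div_div]
          have hxQ : (x' : ℚ) ≠ 0 := Int.cast_ne_zero.mpr hx0
          push_cast
          field_simp
          ring

/-- If `M = R_v^{α₀} L_u^{α₁} ⋯ R_v^{α_{r-1}} L_u^{α_r}` with `r` odd, `u, v ≥ 2`, and
`α_i ≠ 0` for `0 < i < r`, then `b/d = [vα₀, uα₁, vα₂, …, vα_{r-1}]`. -/
theorem ratio_eq_cf (u v : ℤ) (hu : 2 ≤ u) (hv : 2 ≤ v) (r : ℕ) (hr : Odd r)
    (α : ℕ → ℤ) (hα : ∀ i, 0 < i → i < r → α i ≠ 0)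
    (M : SL2) (hM : M = altProd u v true (List.ofFn (fun i : Fin (r + 1) => α i))) :
    (((M : Matrix (Fin 2) (Fin 2) ℤ) 0 1 : ℚ)) / (((M : Matrix (Fin 2) (Fin 2) ℤ) 1 1 : ℚ)) =
      E (List.ofFn (fun i : Fin r => (if (i : ℕ) % 2 = 0 then v else u) * α i)) := by
  subst hM
  have hsplit : List.ofFn (fun i : Fin (r + 1) => α i)
      = (List.ofFn (fun i : Fin r => α i)) ++ [α r] := by
    rw [List.ofFn_succ']
    simp [List.concat_eq_append]
  have hlen : (List.ofFn (fun i : Fin r => α i)).length = r := by simp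
  have hev : ¬ Even (List.ofFn (fun i : Fin r => α i)).length := by
    rw [hlen]; exact Nat.not_even_iff_odd.mpr hr
  have hfac : altProd u v false [α r] = Lmat (u * α r) := by
    simp [altProd, Lmat_zpow]
  rw [hsplit, altProd_append, if_neg hev]
  simp only [Bool.not_true]
  rw [hfac]
  rw [mul_L_apply_01, mul_L_apply_11]
  have htail : ∀ a ∈ (List.ofFn (fun i : Fin r => α i)).tail, a ≠ 0 := by
    have hr2 : r % 2 = 1 := Nat.odd_iff.mp hr
    obtain ⟨m, hm⟩ : ∃ m, r = m + 1 := ⟨r - 1, by omega⟩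
    subst hm
    rw [List.ofFn_succ]
    intro a ha
    simp only [List.tail_cons, List.mem_ofFn] at ha
    obtain ⟨i, hi⟩ := ha
    rw [← hi]
    exact hα _ (by simp [Fin.val_succ]) (by simp [Fin.val_succ])
  obtain ⟨-, hratio, -⟩ := (key_s6 u v hu hv (List.ofFn (fun i : Fin r => α i))).1
    (by rw [hlen]; exact hr) htail
  rw [hratio, scale_ofFn]
  simp only [cond_true, cond_false]
end

section
/- With g_{u,v} defined as above on A₂, if g_{u,v}(⟦q₀,q₁,...,q_r⟧) = ⟦q₀',q₁',...,q_s'⟧, then for every integer n, g_{u,v}(⟦q₀+n,q₁,...,q_r⟧) = ⟦q₀'+n,q₁',...,q_s'⟧; i.e., changing the first entry by n changes only the first entry of the output, by n. -/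
/-- Concatenation `⊕` of finite sequences, merging when the second begins with `0`. -/
def oplus (a b : List ℤ) : List ℤ :=
  match b with
  | [] => a
  | p :: ps =>
    if p = 0 then
      match ps with
      | [] => a
      | p1 :: ps' => a.dropLast ++ (a.getLast! + p1) :: ps'
    else a ++ (p :: ps)

/-- No tail continued fraction `[q_i, …, q_r]` (for `0 < i < r`) evaluates to `0`. -/
def TailsNonzero (l : List ℤ) : Prop :=
  ∀ i, 0 < i → i + 1 < l.length → E (l.drop i) ≠ 0

/-- `[q₀, …, q_r]` is a short continued fraction: `q_i ≥ 1` for `0 < i < r`, `q_r > 1` if `r > 0`. -/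
def IsShortCF (l : List ℤ) : Prop :=
  l ≠ [] ∧ (∀ i, 0 < i → i + 1 < l.length → 1 ≤ l.getD i 0) ∧
    (1 < l.length → 1 < l.getD (l.length - 1) 0)

/-- Membership in `A₁`. -/
def memA1 (l : List ℤ) : Prop := IsShortCF l ∧ TailsNonzero l

/-- Membership in `A₂`: all entries after the first have absolute value `> 1`. -/
def memA2 (l : List ℤ) : Prop :=
  l ≠ [] ∧ (∀ i, 0 < i → i < l.length → 1 < |l.getD i 0|) ∧ TailsNonzero l

/-- The `(u,v)`-divisibility property: `v` divides even-indexed entries, `u` odd-indexed ones. -/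
def DivProp (u v : ℤ) (l : List ℤ) : Prop :=
  ∀ i, i < l.length → (if i % 2 = 0 then v else u) ∣ l.getD i 0

/-- The function `f_{u,v} : A₁ → A₂`. -/
def fCF (u v : ℤ) : List ℤ → List ℤ
  | [] => []
  | [q0] => [q0]
  | q0 :: q1 :: rest =>
    if ¬ (v ∣ q0) ∧ q1 = 1 then
      match rest with
      | [] => [q0 + 1]
      | q2 :: rest' => oplus [q0 + 1] ((fCF v u ((q2 + 1) :: rest')).map (fun x => -x))
    else if ¬ (v ∣ q0) ∧ q1 = 2 then
      match rest with
      | [] => [q0 + 1, -2]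
      | q2 :: rest' => oplus [q0 + 1] (fCF v u (-2 :: (q2 + 1) :: rest'))
    else oplus [q0] (fCF v u (q1 :: rest))
termination_by l => l.length
decreasing_by all_goals (simp_all [List.length]; try omega)

/-- The function `g_{u,v} : A₂ → A₁`. -/
def gCF (u v : ℤ) : List ℤ → List ℤ
  | [] => []
  | [q0] => [q0]
  | q0 :: q1 :: rest =>
    if (q1 < 0 ∧ u ≠ 2) ∨ (q1 < -2 ∧ u = 2) then
      oplus [q0 - 1, 1] ((gCF v u (((q1 + 1) :: rest).map (fun x => -x))))
    else if q1 = -2 ∧ u = 2 then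
      match rest with
      | [] => [q0 - 1, 2]
      | q2 :: rest' => oplus [q0 - 1, 2] (gCF v u ((q2 - 1) :: rest'))
    else oplus [q0] (gCF v u (q1 :: rest))
termination_by l => l.length
decreasing_by all_goals (simp_all [List.length]; try omega)


theorem oplus_shift (a b : List ℤ) : ∃ c t, ∀ x : ℤ, oplus (x :: a) b = (x + c) :: t := by
  match b with
  | [] => exact ⟨0, a, fun x => by simp [oplus]⟩
  | p :: ps =>
    by_cases hp : p = 0
    · subst hp
      match ps with
      | [] => exact ⟨0, a, fun x => by simp [oplus]⟩
      | p1 :: ps' =>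
        match a with
        | [] => exact ⟨p1, ps', fun x => by simp [oplus, List.getLast!]⟩
        | y :: a' =>
          refine ⟨0, (y :: a').dropLast ++ ((y :: a').getLast! + p1) :: ps', fun x => ?_⟩
          simp [oplus, List.getLast!, List.getLast]
    · exact ⟨0, a ++ p :: ps, fun x => by simp [oplus, hp]⟩

/-- Changing the first entry of a sequence in `A₂` by `n` changes only the first
entry of `g_{u,v}`'s output, by `n`. -/
theorem gCF_firstEntry (u v : ℤ) (hu : 2 ≤ u) (hv : 2 ≤ v) (huv : u * v ≠ 4)
    (q0 : ℤ) (rest : List ℤ) (h : memA2 (q0 :: rest)) (n : ℤ) :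
    ∃ q0' rest', gCF u v (q0 :: rest) = q0' :: rest' ∧
      gCF u v ((q0 + n) :: rest) = (q0' + n) :: rest' := by
  match rest with
  | [] => exact ⟨q0, [], by simp [gCF], by simp [gCF]⟩
  | q1 :: rest2 =>
    by_cases h1 : (q1 < 0 ∧ u ≠ 2) ∨ (q1 < -2 ∧ u = 2)
    · obtain ⟨c, t, ht⟩ := oplus_shift [1] (gCF v u (((q1 + 1) :: rest2).map (fun x => -x)))
      refine ⟨q0 - 1 + c, t, ?_, ?_⟩
      · rw [gCF.eq_def]; simp only [if_pos h1]; have := ht (q0 - 1); simpa using this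
      · rw [gCF.eq_def]; simp only [if_pos h1]; have := ht (q0 + n - 1)
        simp only [show (q0:ℤ) + n - 1 = q0 - 1 + n by ring] at this ⊢
        rw [this]; congr 1; ring
    · by_cases h2 : q1 = -2 ∧ u = 2
      · match rest2 with
        | [] =>
          refine ⟨q0 - 1, [2], ?_, ?_⟩
          · rw [gCF.eq_def]; simp only [if_neg h1, if_pos h2]
          · rw [gCF.eq_def]; simp only [if_neg h1, if_pos h2]; congr 2; ring
        | q2 :: rest3 =>
          obtain ⟨c, t, ht⟩ := oplus_shift [2] (gCF v u ((q2 - 1) :: rest3))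
          refine ⟨q0 - 1 + c, t, ?_, ?_⟩
          · rw [gCF.eq_def]; simp only [if_neg h1, if_pos h2]; exact ht (q0 - 1)
          · rw [gCF.eq_def]; simp only [if_neg h1, if_pos h2]; have := ht (q0 + n - 1)
            rw [this]; congr 1; ring
      · obtain ⟨c, t, ht⟩ := oplus_shift [] (gCF v u (q1 :: rest2))
        refine ⟨q0 + c, t, ?_, ?_⟩
        · rw [gCF.eq_def]; simp only [if_neg h1, if_neg h2]; exact ht q0
        · rw [gCF.eq_def]; simp only [if_neg h1, if_neg h2]; have := ht (q0 + n)
          rw [this]; congr 1; ring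
end

section
/- Let u, v, u', v' ≥ 2 be integers with uv ≠ 4 and u'v' ≠ 4. If a sequence ⟦q₀,q₁,...,q_r⟧ ∈ A₂ satisfies the (u,v)-divisibility property (v | q_i for even i and u | q_i for odd i), then f_{u,v}(g_{u',v'}(⟦q₀,q₁,...,q_r⟧)) = ⟦q₀,q₁,...,q_r⟧. -/

def All2 (t : List ℤ) : Prop := ∀ x ∈ t, 1 < |x|

def incHead : List ℤ → List ℤ
  | [] => []
  | p :: t => (p+1) :: t

lemma oplus_nil (a : List ℤ) : oplus a [] = a := rfl

lemma oplus_cons (a : List ℤ) (p : ℤ) (ps : List ℤ) (hp : p ≠ 0) :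
    oplus a (p :: ps) = a ++ p :: ps := by simp [oplus, hp]

lemma oplus_zero_nil (a : List ℤ) : oplus a [0] = a := by simp [oplus]

lemma oplus_merge1 (a p1 : ℤ) (ps : List ℤ) : oplus [a] (0 :: p1 :: ps) = (a + p1) :: ps := by
  simp [oplus, List.getLast!]

lemma oplus_merge2 (a c p1 : ℤ) (ps : List ℤ) :
    oplus [a, c] (0 :: p1 :: ps) = a :: (c + p1) :: ps := by
  simp [oplus, List.getLast!]

lemma incHead_oplus_one (a : ℤ) (b : List ℤ) : incHead (oplus [a] b) = oplus [a+1] b := by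
  match b with
  | [] => rfl
  | p :: ps =>
    by_cases hp : p = 0
    · subst hp
      match ps with
      | [] => simp [oplus, incHead]
      | p1 :: ps' => simp [oplus_merge1, incHead]; ring
    · simp [oplus_cons _ _ _ hp, incHead]

lemma incHead_oplus_two (a c : ℤ) (b : List ℤ) :
    incHead (oplus [a, c] b) = oplus [a+1, c] b := by
  match b with
  | [] => rfl
  | p :: ps =>
    by_cases hp : p = 0
    · subst hp
      match ps with
      | [] => simp [oplus, incHead]
      | p1 :: ps' => simp [oplus_merge2, incHead]
    · simp [oplus_cons _ _ _ hp, incHead]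

lemma oplus_two_ex (a c : ℤ) (b : List ℤ) : ∃ s, oplus [a, c] b = a :: s := by
  match b with
  | [] => exact ⟨[c], rfl⟩
  | p :: ps =>
    by_cases hp : p = 0
    · subst hp
      match ps with
      | [] => exact ⟨[c], oplus_zero_nil _⟩
      | p1 :: ps' => exact ⟨_, oplus_merge2 a c p1 ps'⟩
    · exact ⟨_, oplus_cons _ _ _ hp⟩

lemma gCF_incHead (a b : ℤ) (l : List ℤ) (h : l ≠ []) :
    gCF a b (incHead l) = incHead (gCF a b l) := by
  match l with
  | [q] => simp [gCF, incHead]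
  | q0 :: q1 :: rest =>
    rw [show incHead (q0 :: q1 :: rest) = (q0+1) :: q1 :: rest from rfl]
    rw [gCF.eq_def, gCF.eq_def]
    by_cases h1 : (q1 < 0 ∧ a ≠ 2) ∨ (q1 < -2 ∧ a = 2)
    · simp only [if_pos h1]
      rw [incHead_oplus_two]
      ring_nf
    · by_cases h2 : q1 = -2 ∧ a = 2
      · simp only [if_neg h1, if_pos h2]
        match rest with
        | [] => simp [incHead]
        | q2 :: rest' =>
          simp only []
          rw [incHead_oplus_two]
          ring_nf
      · simp only [if_neg h1, if_neg h2]
        rw [incHead_oplus_one]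
lemma abs_gt_one {x : ℤ} (h : 1 < |x|) : x ≤ -2 ∨ 2 ≤ x := by
  rcases le_or_gt 0 x with h0 | h0
  · right; rw [abs_of_nonneg h0] at h; omega
  · left; rw [abs_of_neg h0] at h; omega

lemma all2_tail {p : ℤ} {t : List ℤ} (h : All2 (p :: t)) : All2 t :=
  fun x hx => h x (List.mem_cons_of_mem _ hx)

lemma all2_neg {t : List ℤ} (h : All2 t) : All2 (t.map (fun x => -x)) := by
  intro x hx
  simp only [List.mem_map] at hx
  obtain ⟨y, hy, rfl⟩ := hx
  simpa using h y hy

lemma all2_head {p : ℤ} {t : List ℤ} (h : All2 (p :: t)) : 1 < |p| :=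
  h p List.mem_cons_self

lemma headG (a b p : ℤ) (t : List ℤ) (h2 : All2 t) :
    ∃ s, gCF a b (p :: t) = p :: s ∨ gCF a b (p :: t) = (p - 1) :: s := by
  induction t generalizing a b p with
  | nil => exact ⟨[], Or.inl (by simp [gCF])⟩
  | cons p1 rest IH =>
    rw [gCF.eq_def]
    by_cases h1 : (p1 < 0 ∧ a ≠ 2) ∨ (p1 < -2 ∧ a = 2)
    · simp only [if_pos h1]
      obtain ⟨s, hs⟩ := oplus_two_ex (p-1) 1 (gCF b a (((p1 + 1) :: rest).map (fun x => -x)))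
      exact ⟨s, Or.inr hs⟩
    · by_cases hB : p1 = -2 ∧ a = 2
      · simp only [if_neg h1, if_pos hB]
        match rest with
        | [] => exact ⟨[2], Or.inr rfl⟩
        | q2 :: rest' =>
          obtain ⟨s, hs⟩ := oplus_two_ex (p-1) 2 (gCF b a ((q2 - 1) :: rest'))
          exact ⟨s, Or.inr hs⟩
      · simp only [if_neg h1, if_neg hB]
        have hp1 : 2 ≤ p1 := by
          rcases abs_gt_one (all2_head h2) with h | h <;> omega
        obtain ⟨s, hs | hs⟩ := IH b a p1 (all2_tail h2)
        · exact ⟨p1 :: s, Or.inl (by rw [hs, oplus_cons _ _ _ (by omega)]; rfl)⟩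
        · exact ⟨(p1-1) :: s, Or.inl (by rw [hs, oplus_cons _ _ _ (by omega)]; rfl)⟩
lemma divProp_head {u v a : ℤ} {t : List ℤ} (h : DivProp u v (a :: t)) : v ∣ a := by
  have := h 0 (by simp)
  simpa using this

lemma divProp_tail {u v a : ℤ} {t : List ℤ} (h : DivProp u v (a :: t)) : DivProp v u t := by
  intro i hi
  have := h (i+1) (by simpa using Nat.succ_lt_succ hi)
  have hpar : (i+1) % 2 = 0 ↔ ¬ (i % 2 = 0) := by omega
  by_cases hp : i % 2 = 0
  · simpa [hp, Nat.add_mod, if_neg ((not_iff_not.mpr hpar).mpr (not_not_intro hp))] using this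
  · simp only [List.getD_cons_succ] at this
    simp only [if_neg hp]
    rwa [if_pos (hpar.mpr hp)] at this
lemma divProp_neg {u v : ℤ} {t : List ℤ} (h : DivProp u v t) :
    DivProp u v (t.map (fun x => -x)) := by
  intro i hi
  simp only [List.length_map] at hi
  have := h i hi
  have hg : (t.map (fun x => -x)).getD i 0 = -(t.getD i 0) := by
    rw [List.getD_eq_getElem _ _ (by simpa using hi), List.getD_eq_getElem _ _ hi]
    simp
  rw [hg]
  exact Dvd.dvd.neg_right this
lemma gCF_A (a b q0 q1 : ℤ) (rest : List ℤ) (h : (q1 < 0 ∧ a ≠ 2) ∨ (q1 < -2 ∧ a = 2)) :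
    gCF a b (q0 :: q1 :: rest)
      = oplus [q0 - 1, 1] (gCF b a (((q1 + 1) :: rest).map (fun x => -x))) := by
  rw [gCF.eq_def]; simp [h]

lemma gCF_B_nil (a b q0 q1 : ℤ) (hA : ¬ ((q1 < 0 ∧ a ≠ 2) ∨ (q1 < -2 ∧ a = 2)))
    (hB : q1 = -2 ∧ a = 2) : gCF a b [q0, q1] = [q0 - 1, 2] := by
  rw [gCF.eq_def]; simp only [if_neg hA, if_pos hB]

lemma gCF_B (a b q0 q1 q2 : ℤ) (rest' : List ℤ)
    (hA : ¬ ((q1 < 0 ∧ a ≠ 2) ∨ (q1 < -2 ∧ a = 2))) (hB : q1 = -2 ∧ a = 2) :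
    gCF a b (q0 :: q1 :: q2 :: rest') = oplus [q0 - 1, 2] (gCF b a ((q2 - 1) :: rest')) := by
  rw [gCF.eq_def]; simp only [if_neg hA, if_pos hB]

lemma gCF_C (a b q0 q1 : ℤ) (rest : List ℤ)
    (hA : ¬ ((q1 < 0 ∧ a ≠ 2) ∨ (q1 < -2 ∧ a = 2))) (hB : ¬ (q1 = -2 ∧ a = 2)) :
    gCF a b (q0 :: q1 :: rest) = oplus [q0] (gCF b a (q1 :: rest)) := by
  rw [gCF.eq_def]; simp only [if_neg hA, if_neg hB]

lemma fCF_one (u v a G0 : ℤ) (Gt : List ℤ) (h : ¬ v ∣ a) :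
    fCF u v (a :: 1 :: G0 :: Gt)
      = oplus [a + 1] ((fCF v u ((G0 + 1) :: Gt)).map (fun x => -x)) := by
  rw [fCF.eq_def]; simp [h]

lemma fCF_two (u v a G0 : ℤ) (Gt : List ℤ) (h : ¬ v ∣ a) :
    fCF u v (a :: 2 :: G0 :: Gt)
      = oplus [a + 1] (fCF v u (-2 :: (G0 + 1) :: Gt)) := by
  rw [fCF.eq_def]; simp [h]

lemma fCF_pass (u v a b : ℤ) (Gt : List ℤ) (h : v ∣ a) :
    fCF u v (a :: b :: Gt) = oplus [a] (fCF v u (b :: Gt)) := by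
  rw [fCF.eq_def]
  simp only [if_neg (show ¬ (¬ v ∣ a ∧ b = 1) from fun hc => hc.1 h),
    if_neg (show ¬ (¬ v ∣ a ∧ b = 2) from fun hc => hc.1 h)]

lemma fCF_two_nil (u v a : ℤ) (h : ¬ v ∣ a) : fCF u v [a, 2] = [a + 1, -2] := by
  rw [fCF.eq_def]; simp [h]

lemma oplus_sc (a p : ℤ) (ps : List ℤ) (hp : p ≠ 0) : oplus [a] (p :: ps) = a :: p :: ps := by
  rw [oplus_cons _ _ _ hp]; rfl

lemma oplus_tc (a c p : ℤ) (ps : List ℤ) (hp : p ≠ 0) : oplus [a, c] (p :: ps) = a :: c :: p :: ps := by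
  rw [oplus_cons _ _ _ hp]; rfl

lemma dvd_big {v q : ℤ} (hv : 3 ≤ v) (hq : v ∣ q) (hne : 1 < |q|) : q ≤ -3 ∨ 3 ≤ q := by
  have hq0 : q ≠ 0 := by rcases abs_gt_one hne with h | h <;> omega
  have h1 : v ∣ |q| := (dvd_abs _ _).mpr hq
  have h2 := Int.le_of_dvd (abs_pos.mpr hq0) h1
  rcases le_or_gt 0 q with h0 | h0
  · right; rw [abs_of_nonneg h0] at h2; omega
  · left; rw [abs_of_neg h0] at h2; omega

lemma not_dvd_pred {v q : ℤ} (hv : 2 ≤ v) (hq : v ∣ q) : ¬ v ∣ (q - 1) := by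
  intro h
  have h1 : v ∣ 1 := by
    have := dvd_sub hq h
    simpa using this
  have := Int.le_of_dvd one_pos h1
  omega

lemma main_lemma : ∀ n : ℕ, ∀ u v u' v' : ℤ, 2 ≤ u → 2 ≤ v → u * v ≠ 4 →
    2 ≤ u' → 2 ≤ v' → u' * v' ≠ 4 →
    ∀ q0 : ℤ, ∀ t : List ℤ, (q0 :: t).length ≤ n → All2 t → DivProp u v (q0 :: t) →
    fCF u v (gCF u' v' (q0 :: t)) = q0 :: t := by
  intro n
  induction n with
  | zero => intro _ _ _ _ _ _ _ _ _ _ q0 t hlen; simp at hlen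
  | succ n IH =>
    intro u v u' v' hu hv huv hu' hv' hu'v' q0 t hlen h2 hdiv
    match t with
    | [] => simp [gCF, fCF]
    | q1 :: rest =>
      have hvq0 : v ∣ q0 := divProp_head hdiv
      have huq1 : u ∣ q1 := divProp_head (divProp_tail hdiv)
      have hq1abs : 1 < |q1| := all2_head h2
      have hlen' : rest.length + 2 ≤ n + 1 := by
        simp only [List.length_cons] at hlen; omega
      by_cases hA : (q1 < 0 ∧ u' ≠ 2) ∨ (q1 < -2 ∧ u' = 2)
      · -- ===== Case A =====
        rw [gCF_A u' v' q0 q1 rest hA]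
        have hq1 : q1 ≤ -2 := by rcases abs_gt_one hq1abs with h | h <;> omega
        have hmrw : ((q1 + 1) :: rest).map (fun x => -x)
            = (-(q1+1)) :: rest.map (fun x => -x) := by simp
        have keyA1 : ∀ G0 : ℤ, ∀ Gt : List ℤ, G0 ≠ 0 →
            gCF v' u' (((q1 + 1) :: rest).map (fun x => -x)) = G0 :: Gt →
            fCF u v (oplus [q0 - 1, 1]
              (gCF v' u' (((q1 + 1) :: rest).map (fun x => -x)))) = q0 :: q1 :: rest := by
          intro G0 Gt hG0 hG
          rw [hG, oplus_cons _ _ _ hG0]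
          show fCF u v ((q0 - 1) :: 1 :: G0 :: Gt) = _
          rw [fCF_one u v (q0 - 1) G0 Gt (not_dvd_pred hv hvq0)]
          have h1 : incHead (((q1 + 1) :: rest).map (fun x => -x))
              = (q1 :: rest).map (fun x => -x) := by
            simp only [List.map_cons, incHead]
            congr 1
            ring
          have hinc : (G0 + 1) :: Gt = gCF v' u' ((q1 :: rest).map (fun x => -x)) := by
            rw [← h1, gCF_incHead _ _ _ (by simp), hG]
            rfl
          have hIH : fCF v u (gCF v' u' ((q1 :: rest).map (fun x => -x)))
              = (q1 :: rest).map (fun x => -x) := by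
            rw [show (q1 :: rest).map (fun x => -x) = (-q1) :: rest.map (fun x => -x) by simp]
            exact IH v u v' u' hv hu (by rw [mul_comm]; exact huv) hv' hu'
              (by rw [mul_comm]; exact hu'v') (-q1) (rest.map (fun x => -x))
              (by simp only [List.length_cons, List.length_map]; omega)
              (all2_neg (all2_tail h2))
              (by have := divProp_neg (divProp_tail hdiv); simpa using this)
          rw [hinc, hIH,
            show ((q1 :: rest).map (fun x => -x)).map (fun x => -x) = q1 :: rest by
              simp [List.map_map, Function.comp],
            oplus_cons _ _ _ (show q1 ≠ 0 by omega),
            show q0 - 1 + 1 = q0 by ring]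
          rfl
        obtain ⟨s, hG | hG⟩ := headG v' u' (-(q1+1)) (rest.map (fun x => -x))
          (all2_neg (all2_tail h2))
        · exact keyA1 (-(q1+1)) s (by omega) (by rw [hmrw]; exact hG)
        · by_cases hq1e : q1 = -2
          · -- the head -(q1+1)-1 may be 0 ; deep case
            subst hq1e
            have hu2 : u = 2 := by
              have h1 : u ∣ 2 := (dvd_neg).mp huq1
              have := Int.le_of_dvd (by norm_num) h1
              omega
            have hv3 : 3 ≤ v := by
              rcases lt_or_ge v 3 with h | h
              · exfalso; apply huv; rw [hu2]; omega
              · exact h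
            match rest with
            | [] =>
              exfalso
              norm_num at hG
              rw [gCF.eq_def] at hG
              simp at hG
            | q2 :: rest' =>
              have hq2v : v ∣ q2 := divProp_head (divProp_tail (divProp_tail hdiv))
              have hq2abs : 1 < |q2| := all2_head (all2_tail h2)
              have hq2' : q2 ≤ -3 ∨ 3 ≤ q2 := dvd_big hv3 hq2v hq2abs
              have key2 : ∀ a' b' : ℤ, 2 ≤ a' → 2 ≤ b' → a' * b' ≠ 4 →
                  ∀ G0 : ℤ, ∀ s' : List ℤ, gCF a' b' ((q2 - 1) :: rest') = G0 :: s' →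
                  fCF u v ((q0 - 1) :: 2 :: G0 :: s') = q0 :: -2 :: q2 :: rest' := by
                intro a' b' ha' hb' hab' G0 s' hG'
                rw [fCF_two u v (q0 - 1) G0 s' (not_dvd_pred hv hvq0)]
                have hinc : (G0 + 1) :: s' = gCF a' b' (q2 :: rest') := by
                  rw [show q2 :: rest' = incHead ((q2 - 1) :: rest') by simp [incHead],
                    gCF_incHead _ _ _ (by simp), hG']
                  rfl
                rw [fCF_pass v u (-2) (G0+1) s' (by rw [hu2]; exact ⟨-1, by norm_num⟩),
                  hinc,
                  IH u v a' b' hu hv huv ha' hb' hab' q2 rest'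
                    (by simp only [List.length_cons] at hlen' ⊢; omega)
                    (all2_tail (all2_tail h2))
                    (divProp_tail (divProp_tail hdiv)),
                  oplus_sc _ _ _ (show q2 ≠ 0 by rcases hq2' with h | h <;> omega),
                  oplus_sc _ _ _ (show (-2 : ℤ) ≠ 0 by norm_num),
                  show q0 - 1 + 1 = q0 by ring]
              by_cases hAm : ((-q2 : ℤ) < 0 ∧ v' ≠ 2) ∨ ((-q2 : ℤ) < -2 ∧ v' = 2)
              · -- inner branch A : q2 ≥ 3
                have hq2pos : 3 ≤ q2 := by
                  rcases hq2' with h | h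
                  · exfalso; rcases hAm with ⟨h', _⟩ | ⟨h', _⟩ <;> omega
                  · exact h
                have keyA2 : ∀ G0 : ℤ, ∀ s' : List ℤ, G0 ≠ 0 →
                    gCF u' v' ((q2 - 1) :: rest') = G0 :: s' →
                    fCF u v (oplus [q0 - 1, 1]
                      (gCF v' u' ((((-2 : ℤ) + 1) :: q2 :: rest').map (fun x => -x))))
                      = q0 :: -2 :: q2 :: rest' := by
                  intro G0 s' h0 hH
                  have hGval : gCF v' u' ((((-2 : ℤ) + 1) :: q2 :: rest').map (fun x => -x))
                      = 0 :: 1 :: G0 :: s' := by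
                    rw [show (((-2 : ℤ) + 1) :: q2 :: rest').map (fun x => -x)
                        = (1 : ℤ) :: (-q2) :: rest'.map (fun x => -x) by norm_num,
                      gCF_A v' u' 1 (-q2) (rest'.map (fun x => -x)) hAm,
                      show ((-q2 + 1) :: rest'.map (fun x => -x)).map (fun x => -x)
                        = (q2 - 1) :: rest' by
                        simp [List.map_map, Function.comp]; ring,
                      hH, oplus_cons _ _ _ h0]
                    norm_num
                  rw [hGval, oplus_merge2, show (1 : ℤ) + 1 = 2 by norm_num]
                  exact key2 u' v' hu' hv' hu'v' G0 s' hH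
                obtain ⟨s', hH | hH⟩ := headG u' v' (q2 - 1) rest' (all2_tail (all2_tail h2))
                · exact keyA2 (q2 - 1) s' (by omega) hH
                · exact keyA2 (q2 - 1 - 1) s' (by omega) hH
              · -- inner branch is B or C : contradiction with hG
                exfalso
                by_cases hBm : (-q2 : ℤ) = -2 ∧ v' = 2
                · rcases hq2' with h | h <;> omega
                · have hq2neg : q2 ≤ -3 := by
                    rcases hq2' with h | h
                    · exact h
                    · exfalso
                      apply hAm
                      by_cases hv'2 : v' = 2
                      · exact Or.inr ⟨by omega, hv'2⟩
                      · exact Or.inl ⟨by omega, hv'2⟩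
                  rw [show (-((-2 : ℤ) + 1) - 1) = 0 by norm_num,
                    show (-((-2 : ℤ) + 1)) = 1 by norm_num,
                    show (q2 :: rest').map (fun x => -x)
                      = (-q2) :: rest'.map (fun x => -x) by simp,
                    gCF_C v' u' 1 (-q2) (rest'.map (fun x => -x)) hAm hBm] at hG
                  obtain ⟨s'', hG'' | hG''⟩ := headG u' v' (-q2) (rest'.map (fun x => -x))
                    (all2_neg (all2_tail (all2_tail h2)))
                  · rw [hG'', oplus_cons _ _ _ (show -q2 ≠ 0 by omega)] at hG
                    simp at hG
                  · rw [hG'', oplus_cons _ _ _ (show -q2 - 1 ≠ 0 by omega)] at hG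
                    simp at hG
          · -- head = -(q1+1)-1 ≠ 0
            exact keyA1 (-(q1+1)-1) s (by omega) (by rw [hmrw]; exact hG)
      · by_cases hB : q1 = -2 ∧ u' = 2
        · -- ===== Case B =====
          obtain ⟨hq1e, hu'2⟩ := hB
          subst hq1e
          have hu2 : u = 2 := by
            have h1 : u ∣ 2 := (dvd_neg).mp huq1
            have := Int.le_of_dvd (by norm_num) h1
            omega
          have hv3 : 3 ≤ v := by
            rcases lt_or_ge v 3 with h | h
            · exfalso; apply huv; rw [hu2]; omega
            · exact h
          match rest with
          | [] =>
            rw [gCF_B_nil u' v' q0 (-2) hA ⟨rfl, hu'2⟩,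
              fCF_two_nil u v (q0 - 1) (not_dvd_pred hv hvq0),
              show q0 - 1 + 1 = q0 by ring]
          | q2 :: rest' =>
            have hq2v : v ∣ q2 := divProp_head (divProp_tail (divProp_tail hdiv))
            have hq2abs : 1 < |q2| := all2_head (all2_tail h2)
            have hq2' : q2 ≤ -3 ∨ 3 ≤ q2 := dvd_big hv3 hq2v hq2abs
            have key2 : ∀ a' b' : ℤ, 2 ≤ a' → 2 ≤ b' → a' * b' ≠ 4 →
                ∀ G0 : ℤ, ∀ s' : List ℤ, gCF a' b' ((q2 - 1) :: rest') = G0 :: s' →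
                fCF u v ((q0 - 1) :: 2 :: G0 :: s') = q0 :: -2 :: q2 :: rest' := by
              intro a' b' ha' hb' hab' G0 s' hG'
              rw [fCF_two u v (q0 - 1) G0 s' (not_dvd_pred hv hvq0)]
              have hinc : (G0 + 1) :: s' = gCF a' b' (q2 :: rest') := by
                rw [show q2 :: rest' = incHead ((q2 - 1) :: rest') by simp [incHead],
                  gCF_incHead _ _ _ (by simp), hG']
                rfl
              rw [fCF_pass v u (-2) (G0+1) s' (by rw [hu2]; exact ⟨-1, by norm_num⟩),
                hinc,
                IH u v a' b' hu hv huv ha' hb' hab' q2 rest'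
                  (by simp only [List.length_cons] at hlen' ⊢; omega)
                  (all2_tail (all2_tail h2))
                  (divProp_tail (divProp_tail hdiv)),
                oplus_sc _ _ _ (show q2 ≠ 0 by rcases hq2' with h | h <;> omega),
                oplus_sc _ _ _ (show (-2 : ℤ) ≠ 0 by norm_num),
                show q0 - 1 + 1 = q0 by ring]
            rw [gCF_B u' v' q0 (-2) q2 rest' hA ⟨rfl, hu'2⟩]
            obtain ⟨s', hH | hH⟩ := headG v' u' (q2 - 1) rest' (all2_tail (all2_tail h2))
            · rw [hH, oplus_cons _ _ _ (show q2 - 1 ≠ 0 by rcases hq2' with h | h <;> omega)]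
              exact key2 v' u' hv' hu' (by rw [mul_comm]; exact hu'v') (q2 - 1) s' hH
            · rw [hH, oplus_cons _ _ _ (show q2 - 1 - 1 ≠ 0 by rcases hq2' with h | h <;> omega)]
              exact key2 v' u' hv' hu' (by rw [mul_comm]; exact hu'v') (q2 - 1 - 1) s' hH
        · -- ===== Case C =====
          have hq1pos : 2 ≤ q1 := by
            rcases abs_gt_one hq1abs with h | h
            · exfalso
              by_cases hu'2 : u' = 2
              · rcases (by omega : q1 < -2 ∨ q1 = -2) with h' | h'
                · exact hA (Or.inr ⟨h', hu'2⟩)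
                · exact hB ⟨h', hu'2⟩
              · exact hA (Or.inl ⟨by omega, hu'2⟩)
            · omega
          rw [gCF_C u' v' q0 q1 rest hA hB]
          have keyC : ∀ G0 : ℤ, ∀ s : List ℤ, G0 ≠ 0 →
              gCF v' u' (q1 :: rest) = G0 :: s →
              fCF u v (oplus [q0] (gCF v' u' (q1 :: rest))) = q0 :: q1 :: rest := by
            intro G0 s h0 hG
            rw [hG, oplus_cons _ _ _ h0]
            show fCF u v (q0 :: G0 :: s) = _
            rw [fCF_pass u v q0 G0 s hvq0, ← hG,
              IH v u v' u' hv hu (by rw [mul_comm]; exact huv) hv' hu'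
                (by rw [mul_comm]; exact hu'v') q1 rest
                (by simp only [List.length_cons] at hlen' ⊢; omega)
                (all2_tail h2) (divProp_tail hdiv),
              oplus_cons _ _ _ (show q1 ≠ 0 by omega)]
            rfl
          obtain ⟨s, hG | hG⟩ := headG v' u' q1 rest (all2_tail h2)
          · exact keyC q1 s (by omega) hG
          · exact keyC (q1 - 1) s (by omega) hG

/-- If `⟦q₀,…,q_r⟧ ∈ A₂` satisfies the `(u,v)`-divisibility property, then
`f_{u,v}(g_{u',v'}(⟦q₀,…,q_r⟧)) = ⟦q₀,…,q_r⟧` for any `u', v' ≥ 2` with `u'v' ≠ 4`. -/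
theorem fCF_gCF (u v u' v' : ℤ) (hu : 2 ≤ u) (hv : 2 ≤ v) (huv : u * v ≠ 4)
    (hu' : 2 ≤ u') (hv' : 2 ≤ v') (hu'v' : u' * v' ≠ 4)
    (l : List ℤ) (hl : memA2 l) (hdiv : DivProp u v l) :
    fCF u v (gCF u' v' l) = l := by
  obtain ⟨hne, habs, -⟩ := hl
  match l with
  | [] => exact absurd rfl hne
  | q0 :: t =>
    have h2 : All2 t := by
      intro x hx
      obtain ⟨i, hi, rfl⟩ := List.mem_iff_getElem.mp hx
      have h := habs (i+1) (by omega) (by simp only [List.length_cons]; omega)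
      rw [List.getD_cons_succ, List.getD_eq_getElem t 0 hi] at h
      exact h
    exact main_lemma (q0 :: t).length u v u' v' hu hv huv hu' hv' hu'v' q0 t le_rfl h2 hdiv
end
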